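/- Let μ be a finite positive measure on ℝ² with total mass 2m and growth bound μ(D(x,r)) ≤ C₃ r^s for all disks, where s ∈ (1,2). Let (T_j = D(c_j,r_j)) be a finite family of disks with ∑_j r_j^s ≤ H, and set T̃_j = T_j \ ∪_{i<j} T_i. For A ≥ 2 define the Marcinkiewicz function g_A = A^{−s} ∑_j (μ(T̃_j)/r_j^s)·χ_{A T_j}. Then ∫ g_A² dμ ≤ C·m for a constant C depending only on s and C₃, uniformly in A. -/

import Mathlib

open MeasureTheory

private lemma stmt9_aux (s C₃ : ℝ) (hC₃ : 0 < C₃)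
    (μ : Measure (EuclideanSpace ℝ (Fin 2))) [IsFiniteMeasure μ]
    {n : ℕ} (c : Fin n → EuclideanSpace ℝ (Fin 2)) (r : Fin n → ℝ)
    (hgrow : ∀ (x : EuclideanSpace ℝ (Fin 2)) (ρ : ℝ), 0 < ρ →
      (μ (Metric.closedBall x ρ)).toReal ≤ C₃ * ρ ^ s)
    (hr : ∀ j, 0 < r j) (A : ℝ) (hA : 2 ≤ A)
    (Tt : Fin n → Set (EuclideanSpace ℝ (Fin 2)))
    (hmeas : ∀ j, MeasurableSet (Tt j))
    (hsub : ∀ j, Tt j ⊆ Metric.closedBall (c j) (r j))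
    (hdisj : Pairwise (Function.onFun Disjoint Tt)) :
    ∫ x, (A ^ (-s) * ∑ j, (μ (Tt j)).toReal / r j ^ s *
        Set.indicator (Metric.closedBall (c j) (A * r j)) (fun _ => (1:ℝ)) x) ^ 2 ∂μ
      ≤ 2 * 3 ^ s * C₃ ^ 2 * (μ Set.univ).toReal := by
  classical
  have hA0 : (0:ℝ) < A := lt_of_lt_of_le two_pos hA
  set E : Fin n → Set (EuclideanSpace ℝ (Fin 2)) :=
    fun j => Metric.closedBall (c j) (A * r j) with hE
  set b : Fin n → ℝ := fun j => (μ (Tt j)).toReal / r j ^ s with hbdef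
  have hb0 : ∀ j, 0 ≤ b j := fun j => div_nonneg ENNReal.toReal_nonneg (Real.rpow_pos_of_pos (hr j) s).le
  have hrs : ∀ j, (0:ℝ) < r j ^ s := fun j => Real.rpow_pos_of_pos (hr j) s
  set cA : ℝ := A ^ (-s) with hcA
  have hcA0 : 0 < cA := Real.rpow_pos_of_pos hA0 _
  -- the X matrix
  set X : Fin n → Fin n → ℝ :=
    fun j k => (cA ^ 2 * (b j * b k)) * (μ (E j ∩ E k)).toReal with hX
  have hX0 : ∀ j k, 0 ≤ X j k := fun j k => by
    have := hb0 j; have := hb0 k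
    positivity
  have hXsymm : ∀ j k, X j k = X k j := fun j k => by
    simp only [hX]; rw [Set.inter_comm]; ring
  -- Step 1: compute the integral
  have hmono : ∀ S T : Set (EuclideanSpace ℝ (Fin 2)), S ⊆ T → (μ S).toReal ≤ (μ T).toReal :=
    fun S T h => ENNReal.toReal_mono (measure_ne_top μ T) (measure_mono h)
  have hmeasE : ∀ j, MeasurableSet (E j) := fun j => Metric.isClosed_closedBall.measurableSet
  have hpt : ∀ x, (cA * ∑ j, b j * Set.indicator (E j) (fun _ => (1:ℝ)) x) ^ 2
      = ∑ j, ∑ k, (cA ^ 2 * (b j * b k)) *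
          Set.indicator (E j ∩ E k) (fun _ => (1:ℝ)) x := by
    intro x
    rw [mul_pow, sq (∑ j, b j * Set.indicator (E j) (fun _ => (1:ℝ)) x),
      Finset.sum_mul_sum, Finset.mul_sum]
    refine Finset.sum_congr rfl fun j _ => ?_
    rw [Finset.mul_sum]
    refine Finset.sum_congr rfl fun k _ => ?_
    have hind : Set.indicator (E j ∩ E k) (fun _ => (1:ℝ)) x
        = Set.indicator (E j) (fun _ => (1:ℝ)) x * Set.indicator (E k) (fun _ => (1:ℝ)) x := by
      rw [← Set.inter_indicator_mul]; simp
    rw [hind]; ring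
  have h1 : ∫ x, (cA * ∑ j, b j * Set.indicator (E j) (fun _ => (1:ℝ)) x) ^ 2 ∂μ
      = ∑ j, ∑ k, X j k := by
    rw [show (fun x => (cA * ∑ j, b j * Set.indicator (E j) (fun _ => (1:ℝ)) x) ^ 2)
        = fun x => ∑ j, ∑ k, (cA ^ 2 * (b j * b k)) *
            Set.indicator (E j ∩ E k) (fun _ => (1:ℝ)) x from funext hpt]
    rw [integral_finset_sum _ (fun j _ => integrable_finset_sum _ (fun k _ =>
      (((integrable_const (1:ℝ)).indicator ((hmeasE j).inter (hmeasE k))).const_mul _)))]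
    refine Finset.sum_congr rfl fun j _ => ?_
    rw [integral_finset_sum _ (fun k _ =>
      (((integrable_const (1:ℝ)).indicator ((hmeasE j).inter (hmeasE k))).const_mul _))]
    refine Finset.sum_congr rfl fun k _ => ?_
    rw [integral_const_mul, integral_indicator_const (1:ℝ) ((hmeasE j).inter (hmeasE k))]
    simp [hX, mul_comm, Measure.real]
  -- Step 2: symmetrize
  have h2 : ∑ j, ∑ k, X j k ≤ 2 * ∑ j, ∑ k, if r k ≤ r j then X j k else 0 := by
    have hle : ∀ j k, X j k ≤ (if r k ≤ r j then X j k else 0) + (if r j ≤ r k then X j k else 0) := by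
      intro j k
      rcases le_total (r k) (r j) with h | h
      · have := hX0 j k
        simp only [if_pos h]
        split_ifs <;> linarith
      · have := hX0 j k
        simp only [if_pos h]
        split_ifs <;> linarith
    calc ∑ j, ∑ k, X j k
        ≤ ∑ j, ∑ k, ((if r k ≤ r j then X j k else 0) + (if r j ≤ r k then X j k else 0)) :=
          Finset.sum_le_sum fun j _ => Finset.sum_le_sum fun k _ => hle j k
      _ = (∑ j, ∑ k, if r k ≤ r j then X j k else 0)
          + ∑ j, ∑ k, if r j ≤ r k then X j k else 0 := by
          rw [← Finset.sum_add_distrib]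
          exact Finset.sum_congr rfl fun j _ => Finset.sum_add_distrib
      _ = 2 * ∑ j, ∑ k, if r k ≤ r j then X j k else 0 := by
          have : (∑ j, ∑ k, if r j ≤ r k then X j k else 0)
              = ∑ j, ∑ k, if r k ≤ r j then X j k else 0 := by
            rw [Finset.sum_comm]
            exact Finset.sum_congr rfl fun j _ => Finset.sum_congr rfl fun k _ => by
              rw [hXsymm]
          rw [this]; ring
  -- Step 3: per-j bound
  have h3 : ∀ j, (∑ k, if r k ≤ r j then X j k else 0)
      ≤ (cA ^ 2 * b j * (C₃ * A ^ s)) * (C₃ * (3 * A * r j) ^ s) := by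
    intro j
    have hPj : 0 ≤ cA ^ 2 * b j * (C₃ * A ^ s) :=
      mul_nonneg (mul_nonneg (sq_nonneg cA) (hb0 j))
        (mul_nonneg hC₃.le (Real.rpow_pos_of_pos hA0 s).le)
    set K : Finset (Fin n) :=
      Finset.univ.filter (fun k => r k ≤ r j ∧ (E j ∩ E k).Nonempty) with hK
    have hterm : ∀ k, (if r k ≤ r j then X j k else 0)
        ≤ if k ∈ K then (cA ^ 2 * b j * (C₃ * A ^ s)) * (μ (Tt k)).toReal else 0 := by
      intro k
      by_cases hrk : r k ≤ r j
      · by_cases hne : (E j ∩ E k).Nonempty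
        · have hkK : k ∈ K := by simp [hK, hrk, hne]
          rw [if_pos hrk, if_pos hkK]
          have hμEk : (μ (E j ∩ E k)).toReal ≤ C₃ * (A * r k) ^ s := by
            refine le_trans (hmono _ _ Set.inter_subset_right) ?_
            exact hgrow (c k) (A * r k) (mul_pos hA0 (hr k))
          have hbk : b k * (C₃ * (A * r k) ^ s) = (C₃ * A ^ s) * (μ (Tt k)).toReal := by
            rw [Real.mul_rpow hA0.le (hr k).le]
            have hbrk : b k * r k ^ s = (μ (Tt k)).toReal := div_mul_cancel₀ _ (hrs k).ne'
            calc b k * (C₃ * (A ^ s * r k ^ s)) = (C₃ * A ^ s) * (b k * r k ^ s) := by ring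
              _ = (C₃ * A ^ s) * (μ (Tt k)).toReal := by rw [hbrk]
          calc X j k = (cA ^ 2 * b j) * (b k * (μ (E j ∩ E k)).toReal) := by
                simp only [hX]; ring
            _ ≤ (cA ^ 2 * b j) * (b k * (C₃ * (A * r k) ^ s)) :=
                mul_le_mul_of_nonneg_left
                  (mul_le_mul_of_nonneg_left hμEk (hb0 k))
                  (mul_nonneg (sq_nonneg cA) (hb0 j))
            _ = (cA ^ 2 * b j * (C₃ * A ^ s)) * (μ (Tt k)).toReal := by rw [hbk]; ring
        · have : (E j ∩ E k) = ∅ := Set.not_nonempty_iff_eq_empty.mp hne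
          rw [if_pos hrk]
          have hXz : X j k = 0 := by simp [hX, this]
          rw [hXz]
          split_ifs with h
          · exact mul_nonneg hPj ENNReal.toReal_nonneg
          · exact le_refl 0
      · rw [if_neg hrk]
        split_ifs with h
        · exact mul_nonneg hPj ENNReal.toReal_nonneg
        · exact le_refl 0
    calc (∑ k, if r k ≤ r j then X j k else 0)
        ≤ ∑ k, if k ∈ K then (cA ^ 2 * b j * (C₃ * A ^ s)) * (μ (Tt k)).toReal else 0 :=
          Finset.sum_le_sum fun k _ => hterm k
      _ = ∑ k ∈ K, (cA ^ 2 * b j * (C₃ * A ^ s)) * (μ (Tt k)).toReal := by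
          rw [Finset.sum_ite_mem, Finset.univ_inter]
      _ = (cA ^ 2 * b j * (C₃ * A ^ s)) * ∑ k ∈ K, (μ (Tt k)).toReal := by
          rw [Finset.mul_sum]
      _ ≤ (cA ^ 2 * b j * (C₃ * A ^ s)) * (C₃ * (3 * A * r j) ^ s) := by
          refine mul_le_mul_of_nonneg_left ?_ hPj
          -- sum of disjoint pieces inside the big ball
          have hsubK : ∀ k ∈ K, Tt k ⊆ Metric.closedBall (c j) (3 * A * r j) := by
            intro k hk y hy
            simp only [hK, Finset.mem_filter] at hk
            obtain ⟨-, hrk, z, hzj, hzk⟩ := hk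
            have hyk : dist y (c k) ≤ r k := Metric.mem_closedBall.mp (hsub k hy)
            have hzj' : dist z (c j) ≤ A * r j := Metric.mem_closedBall.mp hzj
            have hzk' : dist z (c k) ≤ A * r k := Metric.mem_closedBall.mp hzk
            have : dist y (c j) ≤ dist y (c k) + dist (c k) z + dist z (c j) :=
              dist_triangle4 y (c k) z (c j)
            rw [Metric.mem_closedBall]
            have hdck : dist (c k) z = dist z (c k) := dist_comm _ _
            have hrj := hr j
            nlinarith [hr k]
          have hsum : ∑ k ∈ K, (μ (Tt k)).toReal
              = (μ (⋃ k ∈ K, Tt k)).toReal := by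
            rw [measure_biUnion_finset (fun a _ b _ hab => hdisj hab) (fun k _ => hmeas k),
              ENNReal.toReal_sum (fun k _ => measure_ne_top μ _)]
          rw [hsum]
          refine le_trans (hmono _ _ ?_) (hgrow (c j) (3 * A * r j) (by have := hr j; positivity))
          exact Set.iUnion₂_subset hsubK
  -- Step 4: combine
  have hAs : cA ^ 2 * (A ^ s * A ^ s) = 1 := by
    have h : A ^ (-s) * A ^ s = 1 := by
      rw [← Real.rpow_add hA0]; simp
    calc cA ^ 2 * (A ^ s * A ^ s) = (A ^ (-s) * A ^ s) * (A ^ (-s) * A ^ s) := by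
          rw [hcA]; ring
      _ = 1 := by rw [h]; ring
  have hbj : ∀ j, b j * r j ^ s = (μ (Tt j)).toReal := fun j =>
    div_mul_cancel₀ _ (hrs j).ne'
  have h4 : (∑ j, (cA ^ 2 * b j * (C₃ * A ^ s)) * (C₃ * (3 * A * r j) ^ s))
      = 3 ^ s * C₃ ^ 2 * ∑ j, (μ (Tt j)).toReal := by
    rw [Finset.mul_sum]
    refine Finset.sum_congr rfl fun j _ => ?_
    have h3A : ((3:ℝ) * A * r j) ^ s = 3 ^ s * A ^ s * r j ^ s := by
      rw [Real.mul_rpow (by positivity) (hr j).le, Real.mul_rpow (by norm_num) hA0.le]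
    rw [h3A, ← hbj j]
    linear_combination (C₃ ^ 2 * 3 ^ s * (b j * r j ^ s)) * hAs
  have h5 : ∑ j, (μ (Tt j)).toReal ≤ (μ Set.univ).toReal := by
    have : ∑ j, (μ (Tt j)).toReal = (μ (⋃ j ∈ Finset.univ, Tt j)).toReal := by
      rw [measure_biUnion_finset (fun a _ b _ hab => hdisj hab) (fun k _ => hmeas k),
        ENNReal.toReal_sum (fun k _ => measure_ne_top μ _)]
    rw [this]
    exact hmono _ _ (Set.subset_univ _)
  calc ∫ x, (cA * ∑ j, b j * Set.indicator (E j) (fun _ => (1:ℝ)) x) ^ 2 ∂μ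
      = ∑ j, ∑ k, X j k := h1
    _ ≤ 2 * ∑ j, ∑ k, if r k ≤ r j then X j k else 0 := h2
    _ ≤ 2 * ∑ j, (cA ^ 2 * b j * (C₃ * A ^ s)) * (C₃ * (3 * A * r j) ^ s) := by
        refine mul_le_mul_of_nonneg_left (Finset.sum_le_sum fun j _ => h3 j) (by norm_num)
    _ = 2 * (3 ^ s * C₃ ^ 2 * ∑ j, (μ (Tt j)).toReal) := by rw [h4]
    _ = 2 * 3 ^ s * C₃ ^ 2 * ∑ j, (μ (Tt j)).toReal := by ring
    _ ≤ 2 * 3 ^ s * C₃ ^ 2 * (μ Set.univ).toReal :=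
        mul_le_mul_of_nonneg_left h5 (by positivity)

theorem stmt9 (s C₃ : ℝ) (hs : 1 < s ∧ s < 2) (hC₃ : 0 < C₃) :
    ∃ C > 0, ∀ (μ : Measure (EuclideanSpace ℝ (Fin 2))) (m H : ℝ) (n : ℕ)
      (c : Fin n → EuclideanSpace ℝ (Fin 2)) (r : Fin n → ℝ),
      μ Set.univ < ⊤ → 0 < m → (μ Set.univ).toReal = 2 * m →
      (∀ (x : EuclideanSpace ℝ (Fin 2)) (ρ : ℝ), 0 < ρ →
        (μ (Metric.closedBall x ρ)).toReal ≤ C₃ * ρ ^ s) →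
      (∀ j, 0 < r j) → (∑ j, r j ^ s ≤ H) →
      ∀ A : ℝ, 2 ≤ A →
        ∫ x, (A ^ (-s) * ∑ j,
            (μ (Metric.closedBall (c j) (r j) \
                ⋃ (i : Fin n) (_ : i < j), Metric.closedBall (c i) (r i))).toReal / r j ^ s *
              Set.indicator (Metric.closedBall (c j) (A * r j)) (fun _ => (1:ℝ)) x) ^ 2 ∂μ
          ≤ C * m := by
  refine ⟨4 * 3 ^ s * C₃ ^ 2, by positivity, ?_⟩
  intro μ m H n c r hfin hm hmass hgrow hr hH A hA
  haveI : IsFiniteMeasure μ := ⟨hfin⟩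
  set Tt : Fin n → Set (EuclideanSpace ℝ (Fin 2)) := fun j =>
    Metric.closedBall (c j) (r j) \ ⋃ (i : Fin n) (_ : i < j), Metric.closedBall (c i) (r i)
    with hTt
  have hmeas : ∀ j, MeasurableSet (Tt j) := fun j =>
    Metric.isClosed_closedBall.measurableSet.diff
      (MeasurableSet.iUnion fun i => MeasurableSet.iUnion fun _ =>
        Metric.isClosed_closedBall.measurableSet)
  have hsub : ∀ j, Tt j ⊆ Metric.closedBall (c j) (r j) := fun j => Set.diff_subset
  have hlt : ∀ i j : Fin n, i < j → Disjoint (Tt i) (Tt j) := by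
    intro i j hij
    refine Set.disjoint_left.mpr fun x hxi hxj => hxj.2 ?_
    exact Set.mem_biUnion hij hxi.1
  have hdisj : Pairwise (Function.onFun Disjoint Tt) := fun i j hne =>
    hne.lt_or_gt.elim (hlt i j) (fun h => (hlt j i h).symm)
  have := stmt9_aux s C₃ hC₃ μ c r hgrow hr A hA Tt hmeas hsub hdisj
  calc ∫ x, (A ^ (-s) * ∑ j, (μ (Tt j)).toReal / r j ^ s *
        Set.indicator (Metric.closedBall (c j) (A * r j)) (fun _ => (1:ℝ)) x) ^ 2 ∂μ
      ≤ 2 * 3 ^ s * C₃ ^ 2 * (μ Set.univ).toReal := this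
    _ = 4 * 3 ^ s * C₃ ^ 2 * m := by rw [hmass]; ring
    _ ≤ 4 * 3 ^ s * C₃ ^ 2 * m := le_refl _
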